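/- Define x(r) = (r₊ − r)/(2κ) (so x(r) < 0 for r > r₊) and T(x) = e^{iεκx} · (−x)^{−s − i(ε+τ)/2} · (1−x)^{i(ε−τ)/2} for x < 0, where the powers are of positive real bases (t^c = exp(c·log t) with the real logarithm of t > 0). If P : (−∞,0) → ℂ is twice differentiable and satisfies Equation (P) on (−∞,0), then the function R(r) = T(x(r)) · P(x(r)) satisfies the homogeneous radial Teukolsky equation for all r ∈ (r₊, ∞). -/

import Mathlib

open Set Complex

/-- `Δ(r) = r² − 2r + a²`. -/
noncomputable def Δfun (a : ℝ) (r : ℝ) : ℝ := r ^ 2 - 2 * r + a ^ 2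

/-- `K(r) = (r² + a²)ω − m·a`. -/
noncomputable def Kfun (a : ℝ) (m : ℤ) (ω : ℂ) (r : ℝ) : ℂ :=
  ((r : ℂ) ^ 2 + (a : ℂ) ^ 2) * ω - (m : ℂ) * (a : ℂ)

/-- `V(r) = λ − 4isωr − (K² − 2is(r−1)K)/Δ`. -/
noncomputable def Vfun (a : ℝ) (s m : ℤ) (ω lam : ℂ) (r : ℝ) : ℂ :=
  lam - 4 * I * (s : ℂ) * ω * (r : ℂ)
    - ((Kfun a m ω r) ^ 2 - 2 * I * (s : ℂ) * ((r : ℂ) - 1) * Kfun a m ω r)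
      / ((Δfun a r : ℝ) : ℂ)

/-- If `P` solves Equation (P) on `(−∞,0)`, then `R(r) = T(x(r)) P(x(r))`, with
`x(r) = (r₊−r)/(2κ)` and `T(x) = e^{iεκx}(−x)^{−s−i(ε+τ)/2}(1−x)^{i(ε−τ)/2}`,
solves the homogeneous radial Teukolsky equation on `(r₊, ∞)`. -/
noncomputable def Tfun (e0 c1 c2 : ℂ) (t : ℝ) : ℂ :=
  Complex.exp (e0 * (t : ℂ)) * Complex.exp (c1 * (Real.log (-t) : ℂ))
    * Complex.exp (c2 * (Real.log (1 - t) : ℂ))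

noncomputable def Lfun (e0 c1 c2 : ℂ) (t : ℝ) : ℂ :=
  e0 + c1 / (t : ℂ) - c2 / (1 - (t : ℂ))

lemma Ipow3 : (I:ℂ)^3 = -I := by rw [pow_succ, Complex.I_sq]; ring
lemma Ipow4 : (I:ℂ)^4 = 1 := by rw [pow_succ, Ipow3]; simp [Complex.I_mul_I]
lemma Ipow5 : (I:ℂ)^5 = I := by rw [pow_succ, Ipow4]; ring
lemma Ipow6 : (I:ℂ)^6 = -1 := by rw [pow_succ, Ipow5, Complex.I_mul_I]

set_option maxHeartbeats 1000000 in
lemma coeff_id1 {sc εc τc κc X : ℂ} (hX : X ≠ 0) (h1X : 1 - X ≠ 0) :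
    2 * X * (1 - X) * (I * εc * κc + (-sc - I * (εc + τc) / 2) / X - I * (εc - τc) / 2 / (1 - X))
      + (sc + 1) * (1 - 2 * X)
    = 1 - sc - I * εc - I * τc - 2 * (1 - I * εc * κc - I * τc) * X - 2 * I * εc * κc * X ^ 2 := by
  field_simp
  ring

set_option maxHeartbeats 4000000 in
lemma coeff_id2 {sc εc τc κc ac ωc lam X D rC Kv : ℂ}
    (hX : X ≠ 0) (h1X : 1 - X ≠ 0) (hκ : κc ≠ 0) (hD : D ≠ 0)
    (hκ2 : κc ^ 2 = 1 - ac ^ 2)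
    (hε : εc = 2 * ωc)
    (hr : rC = 1 + κc - 2 * κc * X)
    (hDval : D = rC ^ 2 - 2 * rC + ac ^ 2)
    (hK : Kv = (rC ^ 2 + ac ^ 2) * ωc - (εc - κc * τc)) :
    X * (1 - X) * ((I * εc * κc + (-sc - I * (εc + τc) / 2) / X - I * (εc - τc) / 2 / (1 - X)) ^ 2
        + (-(-sc - I * (εc + τc) / 2) / X ^ 2 - I * (εc - τc) / 2 / (1 - X) ^ 2))
      + (sc + 1) * (1 - 2 * X)
        * (I * εc * κc + (-sc - I * (εc + τc) / 2) / X - I * (εc - τc) / 2 / (1 - X))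
      + (lam - 4 * I * sc * ωc * rC - (Kv ^ 2 - 2 * I * sc * (rC - 1) * Kv) / D)
    = lam - εc ^ 2 + I * εc * κc * (1 - 2 * sc) + sc * (sc + 1) + τc * (I + τc)
      + 2 * εc * κc * (-I + I * sc + εc - τc) * X := by
  subst hε hr hK
  have hD4 : D = -(4 * κc ^ 2 * (X * (1 - X))) := by rw [hDval]; linear_combination hκ2
  have hac : ac ^ 2 = 1 - κc ^ 2 := by linear_combination hκ2
  rw [hac]
  field_simp [hX, h1X, hκ, hD]
  rw [hD4]
  ring_nf
  simp only [Complex.I_sq, Ipow3, Ipow4, Ipow5, Ipow6]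
  ring

set_option maxHeartbeats 1000000 in
lemma main_algebra {sc εc τc κc ac ωc lam X D rC A Lv Lv' dd Kv V D1 D2 R0 Q1 Q2 P0 P1 P2 : ℂ}
    (hX : X ≠ 0) (h1X : 1 - X ≠ 0) (hκ : κc ≠ 0) (hD : D ≠ 0)
    (hκ2 : κc ^ 2 = 1 - ac ^ 2)
    (hε : εc = 2 * ωc)
    (hr : rC = 1 + κc - 2 * κc * X)
    (hDval : D = rC ^ 2 - 2 * rC + ac ^ 2)
    (hK : Kv = (rC ^ 2 + ac ^ 2) * ωc - (εc - κc * τc))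
    (hV : V = lam - 4 * I * sc * ωc * rC - (Kv ^ 2 - 2 * I * sc * (rC - 1) * Kv) / D)
    (hdd : dd = -(2 * κc)⁻¹)
    (hL : Lv = I * εc * κc + (-sc - I * (εc + τc) / 2) / X - I * (εc - τc) / 2 / (1 - X))
    (hL' : Lv' = -(-sc - I * (εc + τc) / 2) / X ^ 2 - I * (εc - τc) / 2 / (1 - X) ^ 2)
    (hQ1 : Q1 = 1 - sc - I * εc - I * τc - 2 * (1 - I * εc * κc - I * τc) * X
      - 2 * I * εc * κc * X ^ 2)
    (hQ2 : Q2 = lam - εc ^ 2 + I * εc * κc * (1 - 2 * sc) + sc * (sc + 1) + τc * (I + τc)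
      + 2 * εc * κc * (-I + I * sc + εc - τc) * X)
    (hD1 : D1 = dd * ((A * Lv) * P0 + A * P1))
    (hD2 : D2 = dd * (dd * ((((A * Lv) * Lv + A * Lv') * P0 + (A * Lv) * P1)
      + ((A * Lv) * P1 + A * P2))))
    (hR0 : R0 = A * P0)
    (hode : X * (1 - X) * P2 + Q1 * P1 + Q2 * P0 = 0) :
    D * D2 + 2 * (sc + 1) * (rC - 1) * D1 - V * R0 = 0 := by
  have hD4 : D = -(4 * κc ^ 2 * (X * (1 - X))) := by
    rw [hDval, hr]; linear_combination hκ2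
  have hDdd : D * (dd * dd) = -(X * (1 - X)) := by
    rw [hD4, hdd]; field_simp; ring
  have h2dd : 2 * (sc + 1) * (rC - 1) * dd = -((sc + 1) * (1 - 2 * X)) := by
    rw [hr, hdd]; field_simp; ring
  have id1 : 2 * X * (1 - X) * Lv + (sc + 1) * (1 - 2 * X) = Q1 := by
    rw [hL, hQ1]; exact coeff_id1 hX h1X
  have id2 : X * (1 - X) * (Lv ^ 2 + Lv') + (sc + 1) * (1 - 2 * X) * Lv + V = Q2 := by
    rw [hL, hL', hV, hQ2]; exact coeff_id2 hX h1X hκ hD hκ2 hε hr hDval hK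
  rw [hD1, hD2, hR0]
  linear_combination (A * ((Lv ^ 2 + Lv') * P0 + 2 * Lv * P1 + P2)) * hDdd
    + (A * (Lv * P0 + P1)) * h2dd - (A * P0) * id2 - (A * P1) * id1 - A * hode

lemma Tfun_hasDerivAt (e0 c1 c2 : ℂ) {x : ℝ} (hx : x < 0) :
    HasDerivAt (Tfun e0 c1 c2) (Tfun e0 c1 c2 x * Lfun e0 c1 c2 x) x := by
  have hx0 : x ≠ 0 := ne_of_lt hx
  have hxC : (x : ℂ) ≠ 0 := Complex.ofReal_ne_zero.mpr hx0
  have h1x : (0:ℝ) < 1 - x := by linarith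
  have h1xC : 1 - (x : ℂ) ≠ 0 := by
    have : ((1 - x : ℝ) : ℂ) ≠ 0 := Complex.ofReal_ne_zero.mpr h1x.ne'
    push_cast at this; exact this
  have h1 : HasDerivAt (fun t : ℝ => Complex.exp (e0 * (t:ℂ))) (Complex.exp (e0 * (x:ℂ)) * e0) x := by
    have := (((hasDerivAt_id x).ofReal_comp).const_mul e0).cexp
    simpa using this
  have h2 : HasDerivAt (fun t : ℝ => Real.log (-t)) x⁻¹ x := by
    have := (Real.hasDerivAt_log (show -x ≠ 0 by linarith)).comp x ((hasDerivAt_id x).neg)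
    simpa [Function.comp_def, inv_neg] using this
  have h2c : HasDerivAt (fun t : ℝ => Complex.exp (c1 * (Real.log (-t) : ℂ)))
      (Complex.exp (c1 * (Real.log (-x) : ℂ)) * (c1 * ((x⁻¹ : ℝ) : ℂ))) x :=
    ((h2.ofReal_comp).const_mul c1).cexp
  have h3 : HasDerivAt (fun t : ℝ => Real.log (1 - t)) (-(1 - x)⁻¹) x := by
    have := (Real.hasDerivAt_log h1x.ne').comp x ((hasDerivAt_id x).const_sub 1)
    simpa [Function.comp_def] using this
  have h3c : HasDerivAt (fun t : ℝ => Complex.exp (c2 * (Real.log (1 - t) : ℂ)))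
      (Complex.exp (c2 * (Real.log (1 - x) : ℂ)) * (c2 * ((-(1 - x)⁻¹ : ℝ) : ℂ))) x :=
    ((h3.ofReal_comp).const_mul c2).cexp
  have h := (h1.mul h2c).mul h3c
  refine h.congr_deriv ?_
  unfold Tfun Lfun
  push_cast
  field_simp
  simp only [Pi.mul_apply]
  ring

lemma Lfun_hasDerivAt (e0 c1 c2 : ℂ) {x : ℝ} (hx : x < 0) :
    HasDerivAt (Lfun e0 c1 c2) (-c1 / (x:ℂ)^2 - c2 / (1 - (x:ℂ))^2) x := by
  have hx0 : x ≠ 0 := ne_of_lt hx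
  have hxC : (x : ℂ) ≠ 0 := Complex.ofReal_ne_zero.mpr hx0
  have h1x : (0:ℝ) < 1 - x := by linarith
  have h1xC : 1 - (x : ℂ) ≠ 0 := by
    have : ((1 - x : ℝ) : ℂ) ≠ 0 := Complex.ofReal_ne_zero.mpr h1x.ne'
    push_cast at this; exact this
  have hid : HasDerivAt (fun t : ℝ => ((t : ℝ) : ℂ)) 1 x := by
    simpa using (hasDerivAt_id x).ofReal_comp
  have hinv1 : HasDerivAt (fun t : ℝ => c1 / (t : ℂ)) (-c1 / (x:ℂ)^2) x := by
    have h := (hasDerivAt_const x c1).div hid hxC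
    refine h.congr_deriv ?_
    field_simp
    ring
  have hinv2 : HasDerivAt (fun t : ℝ => c2 / (1 - (t : ℂ))) (c2 / (1 - (x:ℂ))^2) x := by
    have h1t : HasDerivAt (fun t : ℝ => 1 - (t : ℂ)) (-1) x := hid.const_sub 1
    have h := (hasDerivAt_const x c2).div h1t h1xC
    refine h.congr_deriv ?_
    field_simp
    ring
  have h := ((hasDerivAt_const x e0).add hinv1).sub hinv2
  refine h.congr_deriv ?_
  ring

theorem transformed_solution_solves_teukolsky
    (a : ℝ) (ha : |a| < 1) (s m : ℤ) (ω lam : ℂ) (hω : ω ≠ 0)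
    (κ : ℝ) (hκ : κ = Real.sqrt (1 - a ^ 2))
    (rp : ℝ) (hrp : rp = 1 + κ)
    (ε τ : ℂ) (hε : ε = 2 * ω) (hτ : τ = (ε - (m : ℂ) * (a : ℂ)) / (κ : ℂ))
    (T : ℝ → ℂ)
    (hT : ∀ x : ℝ, x < 0 →
      T x = Complex.exp (I * ε * (κ : ℂ) * (x : ℂ))
        * Complex.exp ((-(s : ℂ) - I * (ε + τ) / 2) * (Real.log (-x) : ℂ))
        * Complex.exp ((I * (ε - τ) / 2) * (Real.log (1 - x) : ℂ)))
    (q₁ q₂ : ℝ → ℂ)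
    (hq₁ : ∀ x : ℝ, q₁ x = (1 - (s : ℂ) - I * ε - I * τ)
      - 2 * (1 - I * ε * (κ : ℂ) - I * τ) * (x : ℂ) - 2 * I * ε * (κ : ℂ) * (x : ℂ) ^ 2)
    (hq₂ : ∀ x : ℝ, q₂ x = lam - ε ^ 2 + I * ε * (κ : ℂ) * (1 - 2 * (s : ℂ))
      + (s : ℂ) * ((s : ℂ) + 1) + τ * (I + τ)
      + 2 * ε * (κ : ℂ) * (-I + I * (s : ℂ) + ε - τ) * (x : ℂ))
    (P : ℝ → ℂ)
    (hP : ∀ x ∈ Iio (0 : ℝ), DifferentiableAt ℝ P x)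
    (hP' : ∀ x ∈ Iio (0 : ℝ), DifferentiableAt ℝ (deriv P) x)
    (heqP : ∀ x ∈ Iio (0 : ℝ),
      (x : ℂ) * (1 - (x : ℂ)) * deriv (deriv P) x + q₁ x * deriv P x + q₂ x * P x = 0)
    (R : ℝ → ℂ)
    (hR : ∀ r : ℝ, R r = T ((rp - r) / (2 * κ)) * P ((rp - r) / (2 * κ))) :
    ∀ r ∈ Ioi rp,
      ((Δfun a r : ℝ) : ℂ) * deriv (deriv R) r
        + 2 * ((s : ℂ) + 1) * ((r : ℂ) - 1) * deriv R r
        - Vfun a s m ω lam r * R r = 0 := by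
  intro r hrIoi
  have ha2 : a ^ 2 < 1 := by nlinarith [abs_nonneg a, _root_.sq_abs a]
  have hκpos : 0 < κ := by rw [hκ]; exact Real.sqrt_pos.mpr (by linarith)
  have hκ2r : κ ^ 2 = 1 - a ^ 2 := by rw [hκ]; exact Real.sq_sqrt (by linarith)
  have hκne : κ ≠ 0 := hκpos.ne'
  have hκCne : (κ:ℂ) ≠ 0 := Complex.ofReal_ne_zero.mpr hκne
  have hxfder : ∀ t : ℝ, HasDerivAt (fun u : ℝ => (rp - u) / (2 * κ)) (-(2 * κ)⁻¹) t := by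
    intro t
    have := ((hasDerivAt_id t).const_sub rp).div_const (2 * κ)
    refine this.congr_deriv ?_
    ring
  have hxneg : ∀ t ∈ Ioi rp, (rp - t) / (2 * κ) < 0 := by
    intro t ht
    have : rp < t := ht
    exact div_neg_of_neg_of_pos (by linarith) (by linarith)
  have hcomp1 : ∀ t ∈ Ioi rp, HasDerivAt R
      ((-(2 * κ)⁻¹ : ℝ) • ((Tfun (I * ε * (κ:ℂ)) (-(s:ℂ) - I * (ε + τ) / 2) (I * (ε - τ) / 2) ((rp - t) / (2 * κ)) * Lfun (I * ε * (κ:ℂ)) (-(s:ℂ) - I * (ε + τ) / 2) (I * (ε - τ) / 2) ((rp - t) / (2 * κ))) * P ((rp - t) / (2 * κ)) + Tfun (I * ε * (κ:ℂ)) (-(s:ℂ) - I * (ε + τ) / 2) (I * (ε - τ) / 2) ((rp - t) / (2 * κ)) * deriv P ((rp - t) / (2 * κ)))) t := by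
    intro t ht
    have hxt : (rp - t) / (2 * κ) < 0 := hxneg t ht
    have hTd := Tfun_hasDerivAt (I * ε * (κ:ℂ)) (-(s:ℂ) - I * (ε + τ) / 2) (I * (ε - τ) / 2) hxt
    have hPd := (hP _ hxt).hasDerivAt
    have hG := hTd.mul hPd
    have hchain := hG.scomp t (hxfder t)
    refine hchain.congr_of_eventuallyEq ?_
    filter_upwards [isOpen_Ioi.mem_nhds ht] with u hu
    rw [hR u, hT _ (hxneg u hu)]
    rfl
  have hx0 : (rp - r) / (2 * κ) < 0 := hxneg r hrIoi
  have hx0' : (rp - r) / (2 * κ) ∈ Iio (0:ℝ) := hx0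
  have hTd := Tfun_hasDerivAt (I * ε * (κ:ℂ)) (-(s:ℂ) - I * (ε + τ) / 2) (I * (ε - τ) / 2) hx0
  have hLd := Lfun_hasDerivAt (I * ε * (κ:ℂ)) (-(s:ℂ) - I * (ε + τ) / 2) (I * (ε - τ) / 2) hx0
  have hPd := (hP _ hx0').hasDerivAt
  have hP2d := (hP' _ hx0').hasDerivAt
  have hin := ((hTd.mul hLd).mul hPd).add (hTd.mul hP2d)
  have hR1d := (hin.scomp r (hxfder r)).const_smul (-(2 * κ)⁻¹ : ℝ)
  have hev : deriv R =ᶠ[nhds r] (fun t =>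
      (-(2 * κ)⁻¹ : ℝ) • ((Tfun (I * ε * (κ:ℂ)) (-(s:ℂ) - I * (ε + τ) / 2) (I * (ε - τ) / 2) ((rp - t) / (2 * κ)) * Lfun (I * ε * (κ:ℂ)) (-(s:ℂ) - I * (ε + τ) / 2) (I * (ε - τ) / 2) ((rp - t) / (2 * κ))) * P ((rp - t) / (2 * κ)) + Tfun (I * ε * (κ:ℂ)) (-(s:ℂ) - I * (ε + τ) / 2) (I * (ε - τ) / 2) ((rp - t) / (2 * κ)) * deriv P ((rp - t) / (2 * κ)))) := by
    filter_upwards [isOpen_Ioi.mem_nhds hrIoi] with t ht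
    exact (hcomp1 t ht).deriv
  have hderiv2 := hev.deriv_eq.trans hR1d.deriv
  have hr_eq : r = 1 + κ - 2 * κ * ((rp - r) / (2 * κ)) := by
    rw [hrp]; field_simp; ring
  rw [hderiv2, (hcomp1 r hrIoi).deriv, hR r, hT _ hx0]
  refine main_algebra (A := Tfun (I * ε * (κ:ℂ)) (-(s:ℂ) - I * (ε + τ) / 2) (I * (ε - τ) / 2) ((rp - r) / (2 * κ))) (ac := (a:ℂ)) (Kv := Kfun a m ω r) (Lv := Lfun (I * ε * (κ:ℂ)) (-(s:ℂ) - I * (ε + τ) / 2) (I * (ε - τ) / 2) ((rp - r) / (2 * κ))) (Lv' := -(-(s:ℂ) - I * (ε + τ) / 2) / ((((rp - r) / (2 * κ)) : ℝ):ℂ) ^ 2 - (I * (ε - τ) / 2) / (1 - ((((rp - r) / (2 * κ)) : ℝ):ℂ)) ^ 2) (dd := ((-(2 * κ)⁻¹ : ℝ) : ℂ)) (P0 := P ((rp - r) / (2 * κ))) (P1 := deriv P ((rp - r) / (2 * κ)))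
    (P2 := deriv (deriv P) ((rp - r) / (2 * κ)))
    ?_ ?_ hκCne ?_ ?_ hε ?_ ?_ ?_ ?_ ?_ ?_ ?_ (hq₁ _) (hq₂ _) ?_ ?_ ?_ (heqP _ hx0')
  · exact Complex.ofReal_ne_zero.mpr hx0.ne
  · refine sub_ne_zero.mpr (Ne.symm ?_)
    exact_mod_cast ((by linarith : (rp - r) / (2 * κ) < 1).ne : (rp - r) / (2 * κ) ≠ 1)
  · -- Δ ≠ 0
    have hΔ : Δfun a r = 4 * κ ^ 2 * (((rp - r) / (2 * κ)) ^ 2 - (rp - r) / (2 * κ)) := by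
      simp only [Δfun]
      linear_combination (r + (1 + κ - 2 * κ * ((rp - r) / (2 * κ))) - 2) * hr_eq + hκ2r
    have hΔpos : 0 < Δfun a r := by
      rw [hΔ]
      have h2 : ((rp - r) / (2 * κ)) ^ 2 - (rp - r) / (2 * κ) > 0 := by nlinarith [hx0]
      positivity
    exact Complex.ofReal_ne_zero.mpr hΔpos.ne'
  · exact_mod_cast congrArg (Complex.ofReal) hκ2r
  · exact_mod_cast congrArg (Complex.ofReal) hr_eq
  · simp only [Δfun]; push_cast; ring
  · -- K
    have hma : (κ:ℂ) * τ = ε - (m:ℂ) * (a:ℂ) := by rw [hτ]; field_simp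
    simp only [Kfun]
    linear_combination -hma
  · rfl
  · push_cast; ring
  · rfl
  · rfl
  · simp only [Complex.real_smul]
  · simp only [Complex.real_smul, Pi.mul_apply]
  · rfl
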